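/- arXiv:1102.0666 — 3 statements merged into one kernel-verified Lean document; each statement's English description precedes it below -/
import Mathlib

section
/- Let L ⊆ Σ* and 0 ≤ ε < 1/2. Then L is recognized with error bound ε by some RT-PFA↻ if and only if L is recognized with error bound ε by some RT-PostPFA. In particular, the class of languages recognized by RT-PFA↻s with bounded error equals PostS. -/
noncomputable section

/-- The input alphabet extended with the two endmarkers `¢` and `$`. -/
inductive ESym (α : Type) : Type where
  | cent : ESym α
  | dollar : ESym α
  | letter : α → ESym α

/-- The state distribution obtained by applying, in order, the matrices for
`¢`, the letters of `w`, and `$` to the standard basis vector at the initial state `0`. -/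
def pRun {α : Type} {n : ℕ} (A : ESym α → Matrix (Fin (n + 1)) (Fin (n + 1)) ℝ)
    (w : List α) : Fin (n + 1) → ℝ :=
  (ESym.cent :: (w.map ESym.letter ++ [ESym.dollar])).foldl
    (fun v σ => (A σ).mulVec v) (Pi.single 0 1)

/-- A real-time probabilistic finite automaton with postselection (RT-PostPFA). -/
structure PostPFA (α : Type) where
  n : ℕ
  A : ESym α → Matrix (Fin (n + 1)) (Fin (n + 1)) ℝ
  nonneg : ∀ σ i j, 0 ≤ A σ i j
  colSum : ∀ σ j, ∑ i, A σ i j = 1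
  Qpa : Finset (Fin (n + 1))
  Qpr : Finset (Fin (n + 1))
  disj : Disjoint Qpa Qpr
  postPos : ∀ w : List α,
    0 < (∑ i ∈ Qpa, pRun A w i) + (∑ i ∈ Qpr, pRun A w i)

/-- Acceptance probability before postselection. -/
def PostPFA.pacc {α : Type} (M : PostPFA α) (w : List α) : ℝ :=
  ∑ i ∈ M.Qpa, pRun M.A w i

/-- Rejection probability before postselection. -/
def PostPFA.prej {α : Type} (M : PostPFA α) (w : List α) : ℝ :=
  ∑ i ∈ M.Qpr, pRun M.A w i

/-- Normalized acceptance probability of an RT-PostPFA. -/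
def PostPFA.fa {α : Type} (M : PostPFA α) (w : List α) : ℝ :=
  M.pacc w / (M.pacc w + M.prej w)

/-- Recognition of a language with error bound `ε`. -/
def PostPFA.Recognizes {α : Type} (M : PostPFA α) (L : Set (List α)) (ε : ℝ) : Prop :=
  ∀ w : List α, (w ∈ L → 1 - ε ≤ M.fa w) ∧ (w ∉ L → M.fa w ≤ ε)

/-- The class of languages recognized by RT-PostPFAs with bounded error. -/
def PostS {α : Type} (L : Set (List α)) : Prop :=
  ∃ (M : PostPFA α) (ε : ℝ), 0 ≤ ε ∧ ε < 1 / 2 ∧ M.Recognizes L ε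

/-- Recognition with zero error: `fa = 1` on members, `fa = 0` on non-members. -/
def PostPFA.RecognizesZero {α : Type} (M : PostPFA α) (L : Set (List α)) : Prop :=
  ∀ w : List α, (w ∈ L → M.fa w = 1) ∧ (w ∉ L → M.fa w = 0)

/-- The class of languages recognized by RT-PostPFAs with zero error. -/
def ZPostS {α : Type} (L : Set (List α)) : Prop :=
  ∃ M : PostPFA α, M.RecognizesZero L

/-- A real-time probabilistic finite automaton with restart (RT-PFA↻),
restarting only at the right end of the input. -/
structure RestartPFA (α : Type) where
  n : ℕ
  A : ESym α → Matrix (Fin (n + 1)) (Fin (n + 1)) ℝ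
  nonneg : ∀ σ i j, 0 ≤ A σ i j
  colSum : ∀ σ j, ∑ i, A σ i j = 1
  Qa : Finset (Fin (n + 1))
  Qr : Finset (Fin (n + 1))
  disj : Disjoint Qa Qr
  haltPos : ∀ w : List α,
    0 < (∑ i ∈ Qa, pRun A w i) + (∑ i ∈ Qr, pRun A w i)

/-- Acceptance probability of a single round. -/
def RestartPFA.pacc {α : Type} (M : RestartPFA α) (w : List α) : ℝ :=
  ∑ i ∈ M.Qa, pRun M.A w i

/-- Rejection probability of a single round. -/
def RestartPFA.prej {α : Type} (M : RestartPFA α) (w : List α) : ℝ :=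
  ∑ i ∈ M.Qr, pRun M.A w i

/-- Overall acceptance probability of an RT-PFA↻: the sum over the number of
restarts of the probability of restarting that many times and then accepting. -/
def RestartPFA.fa {α : Type} (M : RestartPFA α) (w : List α) : ℝ :=
  ∑' i : ℕ, (1 - M.pacc w - M.prej w) ^ i * M.pacc w

/-- Recognition of a language with error bound `ε`. -/
def RestartPFA.Recognizes {α : Type} (M : RestartPFA α) (L : Set (List α)) (ε : ℝ) : Prop :=
  ∀ w : List α, (w ∈ L → 1 - ε ≤ M.fa w) ∧ (w ∉ L → M.fa w ≤ ε)

/-- The class of languages recognized by RT-PFA↻s with bounded error. -/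
def RestartS {α : Type} (L : Set (List α)) : Prop :=
  ∃ (M : RestartPFA α) (ε : ℝ), 0 ≤ ε ∧ ε < 1 / 2 ∧ M.Recognizes L ε


lemma foldl_mulVec_nonneg {α : Type} {n : ℕ} {A : ESym α → Matrix (Fin (n + 1)) (Fin (n + 1)) ℝ}
    (hA : ∀ σ i j, 0 ≤ A σ i j) (l : List (ESym α)) (v : Fin (n + 1) → ℝ)
    (hv : ∀ i, 0 ≤ v i) (i : Fin (n + 1)) :
    0 ≤ (l.foldl (fun v σ => (A σ).mulVec v) v) i := by
  induction l generalizing v with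
  | nil => exact hv i
  | cons σ l ih =>
      refine ih _ (fun j => ?_)
      simp only [Matrix.mulVec, dotProduct]
      exact Finset.sum_nonneg fun k _ => mul_nonneg (hA σ j k) (hv k)

lemma foldl_mulVec_sum {α : Type} {n : ℕ} {A : ESym α → Matrix (Fin (n + 1)) (Fin (n + 1)) ℝ}
    (hA : ∀ σ j, ∑ i, A σ i j = 1) (l : List (ESym α)) (v : Fin (n + 1) → ℝ) :
    ∑ i, (l.foldl (fun v σ => (A σ).mulVec v) v) i = ∑ i, v i := by
  induction l generalizing v with
  | nil => rfl
  | cons σ l ih =>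
      rw [List.foldl_cons, ih]
      unfold Matrix.mulVec dotProduct
      rw [Finset.sum_comm]
      simp_rw [← Finset.sum_mul, hA, one_mul]

lemma pRun_nonneg {α : Type} {n : ℕ} {A : ESym α → Matrix (Fin (n + 1)) (Fin (n + 1)) ℝ}
    (hA : ∀ σ i j, 0 ≤ A σ i j) (w : List α) (i : Fin (n + 1)) : 0 ≤ pRun A w i := by
  refine foldl_mulVec_nonneg hA _ _ (fun j => ?_) i
  rcases eq_or_ne j 0 with h | h <;> simp [Pi.single_apply, h]

lemma pRun_sum_one {α : Type} {n : ℕ} {A : ESym α → Matrix (Fin (n + 1)) (Fin (n + 1)) ℝ}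
    (hA : ∀ σ j, ∑ i, A σ i j = 1) (w : List α) : ∑ i, pRun A w i = 1 := by
  rw [pRun, foldl_mulVec_sum hA]
  simp

lemma sum_sub_le_one {n : ℕ} (v : Fin (n + 1) → ℝ) (hv : ∀ i, 0 ≤ v i)
    (hs : ∑ i, v i = 1) (S T : Finset (Fin (n + 1))) (hST : Disjoint S T) :
    (∑ i ∈ S, v i) + (∑ i ∈ T, v i) ≤ 1 := by
  rw [← Finset.sum_union hST, ← hs]
  exact Finset.sum_le_sum_of_subset_of_nonneg (Finset.subset_univ _) (fun i _ _ => hv i)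

lemma restart_fa_eq {α : Type} (M : RestartPFA α) (w : List α) :
    M.fa w = M.pacc w / (M.pacc w + M.prej w) := by
  have hnn := pRun_nonneg M.nonneg (A := M.A) w
  have hpa : 0 ≤ M.pacc w := Finset.sum_nonneg fun i _ => hnn i
  have hpr : 0 ≤ M.prej w := Finset.sum_nonneg fun i _ => hnn i
  have hle : M.pacc w + M.prej w ≤ 1 :=
    sum_sub_le_one _ hnn (pRun_sum_one M.colSum w) _ _ M.disj
  have hpos : 0 < M.pacc w + M.prej w := M.haltPos w
  rw [RestartPFA.fa, tsum_mul_right, sub_sub,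
    tsum_geometric_of_lt_one (by linarith) (by linarith),
    sub_sub_cancel, inv_mul_eq_div]

def RestartPFA.toPost {α : Type} (M : RestartPFA α) : PostPFA α :=
  { n := M.n, A := M.A, nonneg := M.nonneg, colSum := M.colSum,
    Qpa := M.Qa, Qpr := M.Qr, disj := M.disj, postPos := M.haltPos }

def PostPFA.toRestart {α : Type} (M : PostPFA α) : RestartPFA α :=
  { n := M.n, A := M.A, nonneg := M.nonneg, colSum := M.colSum,
    Qa := M.Qpa, Qr := M.Qpr, disj := M.disj, haltPos := M.postPos }

lemma toPost_fa {α : Type} (M : RestartPFA α) (w : List α) :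
    M.toPost.fa w = M.fa w := by
  rw [restart_fa_eq]; rfl

lemma toRestart_fa {α : Type} (M : PostPFA α) (w : List α) :
    M.toRestart.fa w = M.fa w := by
  rw [restart_fa_eq]; rfl

/-- A language is recognized with error bound `ε` by some RT-PFA↻ iff it is
recognized with error bound `ε` by some RT-PostPFA; in particular the class of
languages recognized by RT-PFA↻s with bounded error equals `PostS`. -/
theorem restartPFA_iff_postPFA (α : Type) [Fintype α] :
    (∀ (L : Set (List α)) (ε : ℝ), 0 ≤ ε → ε < 1 / 2 →
      ((∃ M : RestartPFA α, M.Recognizes L ε) ↔ (∃ M : PostPFA α, M.Recognizes L ε))) ∧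
      {L : Set (List α) | RestartS L} = {L : Set (List α) | PostS L} := by
  have key : ∀ (L : Set (List α)) (ε : ℝ),
      ((∃ M : RestartPFA α, M.Recognizes L ε) ↔ (∃ M : PostPFA α, M.Recognizes L ε)) := by
    intro L ε
    constructor
    · rintro ⟨M, hM⟩
      exact ⟨M.toPost, fun w => by
        have := hM w
        constructor
        · intro hw; rw [toPost_fa]; exact this.1 hw
        · intro hw; rw [toPost_fa]; exact this.2 hw⟩
    · rintro ⟨M, hM⟩
      exact ⟨M.toRestart, fun w => by
        have := hM w
        constructor
        · intro hw; rw [toRestart_fa]; exact this.1 hw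
        · intro hw; rw [toRestart_fa]; exact this.2 hw⟩
  refine ⟨fun L ε _ _ => key L ε, ?_⟩
  ext L
  simp only [Set.mem_setOf_eq, RestartS, PostS]
  constructor
  · rintro ⟨M, ε, h0, h1, hM⟩
    obtain ⟨M', hM'⟩ := (key L ε).mp ⟨M, hM⟩
    exact ⟨M', ε, h0, h1, hM'⟩
  · rintro ⟨M, ε, h0, h1, hM⟩
    obtain ⟨M', hM'⟩ := (key L ε).mpr ⟨M, hM⟩
    exact ⟨M', ε, h0, h1, hM'⟩
end
end

section
/- PostS is closed under complementation, union, and intersection: if L, L₁, L₂ ⊆ Σ* belong to PostS, then so do Σ* \ L, L₁ ∪ L₂, and L₁ ∩ L₂. -/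
noncomputable section

namespace PostSClosureAux

open Finset

variable {α : Type}

private lemma foldl_nonneg {n : ℕ} (A : ESym α → Matrix (Fin (n+1)) (Fin (n+1)) ℝ)
    (hA : ∀ σ i j, 0 ≤ A σ i j) (l : List (ESym α)) (v : Fin (n+1) → ℝ)
    (hv : ∀ j, 0 ≤ v j) : ∀ i, 0 ≤ l.foldl (fun v σ => (A σ).mulVec v) v i := by
  induction l generalizing v with
  | nil => exact hv
  | cons σ l ih =>
    intro i
    refine ih _ (fun j => ?_) i
    simp only [Matrix.mulVec, dotProduct]
    exact Finset.sum_nonneg fun k _ => mul_nonneg (hA σ j k) (hv k)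

private lemma pRun_nonneg {n : ℕ} (A : ESym α → Matrix (Fin (n+1)) (Fin (n+1)) ℝ)
    (hA : ∀ σ i j, 0 ≤ A σ i j) (w : List α) (i : Fin (n+1)) : 0 ≤ pRun A w i := by
  classical
  refine foldl_nonneg A hA _ _ (fun j => ?_) i
  rcases eq_or_ne j 0 with h | h <;> simp [Pi.single_apply, h]

lemma pacc_nonneg (M : PostPFA α) (w : List α) : 0 ≤ M.pacc w :=
  Finset.sum_nonneg fun i _ => pRun_nonneg M.A M.nonneg w i

lemma prej_nonneg (M : PostPFA α) (w : List α) : 0 ≤ M.prej w :=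
  Finset.sum_nonneg fun i _ => pRun_nonneg M.A M.nonneg w i

lemma postPos' (M : PostPFA α) (w : List α) : 0 < M.pacc w + M.prej w := M.postPos w

lemma fa_nonneg (M : PostPFA α) (w : List α) : 0 ≤ M.fa w :=
  div_nonneg (pacc_nonneg M w) (postPos' M w).le

lemma fa_le_one (M : PostPFA α) (w : List α) : M.fa w ≤ 1 := by
  rw [PostPFA.fa, div_le_one (postPos' M w)]
  linarith [prej_nonneg M w]

/-! ### Complementation -/

def compl (M : PostPFA α) : PostPFA α :=
  { M with
    Qpa := M.Qpr
    Qpr := M.Qpa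
    disj := M.disj.symm
    postPos := fun w => by have := M.postPos w; linarith }

lemma compl_fa (M : PostPFA α) (w : List α) : (compl M).fa w = 1 - M.fa w := by
  have hs := postPos' M w
  have h1 : (compl M).pacc w = M.prej w := rfl
  have h2 : (compl M).prej w = M.pacc w := rfl
  rw [PostPFA.fa, PostPFA.fa, h1, h2, add_comm (M.prej w), eq_sub_iff_add_eq,
    ← add_div, add_comm (M.prej w), div_self hs.ne']

lemma compl_PostS {L : Set (List α)} (h : PostS L) : PostS Lᶜ := by
  obtain ⟨M, ε, hε0, hε, hrec⟩ := h
  refine ⟨compl M, ε, hε0, hε, fun w => ?_⟩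
  rw [compl_fa]
  constructor
  · intro hw
    have := (hrec w).2 hw
    linarith
  · intro hw
    have := (hrec w).1 (by simpa using hw)
    linarith

/-! ### Tensor construction -/

def tN (M₁ M₂ : PostPFA α) : ℕ := M₁.n * M₂.n + M₁.n + M₂.n

def tEqv (M₁ M₂ : PostPFA α) : (Fin (M₁.n+1) × Fin (M₂.n+1)) ≃ Fin (tN M₁ M₂ + 1) :=
  finProdFinEquiv.trans (finCongr (by simp [tN]; ring))

def tA (M₁ M₂ : PostPFA α) (σ : ESym α) :
    Matrix (Fin (tN M₁ M₂ + 1)) (Fin (tN M₁ M₂ + 1)) ℝ :=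
  fun i j => M₁.A σ ((tEqv M₁ M₂).symm i).1 ((tEqv M₁ M₂).symm j).1 *
             M₂.A σ ((tEqv M₁ M₂).symm i).2 ((tEqv M₁ M₂).symm j).2

lemma sum_tensor {M₁ M₂ : PostPFA α} (f : Fin (M₁.n+1) → ℝ) (g : Fin (M₂.n+1) → ℝ) :
    ∑ i : Fin (tN M₁ M₂ + 1), f ((tEqv M₁ M₂).symm i).1 * g ((tEqv M₁ M₂).symm i).2
      = (∑ a, f a) * (∑ b, g b) := by
  rw [← Equiv.sum_comp (tEqv M₁ M₂) (fun i => f ((tEqv M₁ M₂).symm i).1 * g ((tEqv M₁ M₂).symm i).2)]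
  simp only [Equiv.symm_apply_apply]
  rw [Fintype.sum_prod_type, Finset.sum_mul_sum]

lemma tA_mulVec (M₁ M₂ : PostPFA α) (σ : ESym α) (v₁ : Fin (M₁.n+1) → ℝ)
    (v₂ : Fin (M₂.n+1) → ℝ) :
    (tA M₁ M₂ σ).mulVec (fun i => v₁ ((tEqv M₁ M₂).symm i).1 * v₂ ((tEqv M₁ M₂).symm i).2)
      = fun i => (M₁.A σ).mulVec v₁ ((tEqv M₁ M₂).symm i).1 *
                 (M₂.A σ).mulVec v₂ ((tEqv M₁ M₂).symm i).2 := by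
  funext i
  simp only [Matrix.mulVec, dotProduct, tA]
  rw [← sum_tensor (M₁ := M₁) (M₂ := M₂)
    (fun a => M₁.A σ ((tEqv M₁ M₂).symm i).1 a * v₁ a)
    (fun b => M₂.A σ ((tEqv M₁ M₂).symm i).2 b * v₂ b)]
  exact Finset.sum_congr rfl fun j _ => by ring

lemma tEqv_zero (M₁ M₂ : PostPFA α) : tEqv M₁ M₂ (0, 0) = 0 := by
  ext
  simp [tEqv, finProdFinEquiv]

lemma single_tensor (M₁ M₂ : PostPFA α) :
    (Pi.single 0 1 : Fin (tN M₁ M₂ + 1) → ℝ)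
      = fun i => (Pi.single 0 1 : Fin (M₁.n+1) → ℝ) ((tEqv M₁ M₂).symm i).1 *
                 (Pi.single 0 1 : Fin (M₂.n+1) → ℝ) ((tEqv M₁ M₂).symm i).2 := by
  classical
  funext i
  rcases eq_or_ne i 0 with h | h
  · subst h
    have : (tEqv M₁ M₂).symm 0 = (0, 0) := by
      rw [← tEqv_zero M₁ M₂, Equiv.symm_apply_apply]
    rw [this]
    simp
  · have hne : (tEqv M₁ M₂).symm i ≠ (0, 0) := by
      intro hc
      exact h (((Equiv.symm_apply_eq _).mp hc).trans (tEqv_zero M₁ M₂))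
    have : ((tEqv M₁ M₂).symm i).1 ≠ 0 ∨ ((tEqv M₁ M₂).symm i).2 ≠ 0 := by
      by_contra hc
      push_neg at hc
      exact hne (Prod.ext hc.1 hc.2)
    rcases this with h1 | h1 <;> simp [Pi.single_apply, h, h1]

lemma foldl_tensor (M₁ M₂ : PostPFA α) (l : List (ESym α)) (v₁ : Fin (M₁.n+1) → ℝ)
    (v₂ : Fin (M₂.n+1) → ℝ) :
    l.foldl (fun v σ => (tA M₁ M₂ σ).mulVec v)
        (fun i => v₁ ((tEqv M₁ M₂).symm i).1 * v₂ ((tEqv M₁ M₂).symm i).2)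
      = fun i => (l.foldl (fun v σ => (M₁.A σ).mulVec v) v₁) ((tEqv M₁ M₂).symm i).1 *
                 (l.foldl (fun v σ => (M₂.A σ).mulVec v) v₂) ((tEqv M₁ M₂).symm i).2 := by
  induction l generalizing v₁ v₂ with
  | nil => rfl
  | cons σ l ih =>
    simp only [List.foldl_cons]
    rw [tA_mulVec M₁ M₂ σ v₁ v₂, ih]

lemma pRun_tensor (M₁ M₂ : PostPFA α) (w : List α) :
    pRun (tA M₁ M₂) w
      = fun i => pRun M₁.A w ((tEqv M₁ M₂).symm i).1 * pRun M₂.A w ((tEqv M₁ M₂).symm i).2 := by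
  unfold pRun
  rw [single_tensor M₁ M₂, foldl_tensor]

lemma tA_nonneg (M₁ M₂ : PostPFA α) : ∀ σ i j, 0 ≤ tA M₁ M₂ σ i j :=
  fun σ i j => mul_nonneg (M₁.nonneg σ _ _) (M₂.nonneg σ _ _)

lemma tA_colSum (M₁ M₂ : PostPFA α) : ∀ σ j, ∑ i, tA M₁ M₂ σ i j = 1 := by
  intro σ j
  calc ∑ i, tA M₁ M₂ σ i j
      = (∑ a, M₁.A σ a ((tEqv M₁ M₂).symm j).1) * (∑ b, M₂.A σ b ((tEqv M₁ M₂).symm j).2) :=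
        sum_tensor (fun a => M₁.A σ a ((tEqv M₁ M₂).symm j).1)
          (fun b => M₂.A σ b ((tEqv M₁ M₂).symm j).2)
    _ = 1 := by rw [M₁.colSum, M₂.colSum, one_mul]

/-- The tensor-product machine, with arbitrary postselection sets on the product. -/
def tensor (M₁ M₂ : PostPFA α) (Sa Sr : Finset (Fin (M₁.n+1) × Fin (M₂.n+1)))
    (hd : Disjoint Sa Sr)
    (hp : ∀ w : List α,
      0 < (∑ p ∈ Sa, pRun M₁.A w p.1 * pRun M₂.A w p.2) +
          (∑ p ∈ Sr, pRun M₁.A w p.1 * pRun M₂.A w p.2)) : PostPFA α where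
  n := tN M₁ M₂
  A := tA M₁ M₂
  nonneg := tA_nonneg M₁ M₂
  colSum := tA_colSum M₁ M₂
  Qpa := Sa.map (tEqv M₁ M₂).toEmbedding
  Qpr := Sr.map (tEqv M₁ M₂).toEmbedding
  disj := by
    rw [Finset.disjoint_map]
    exact hd
  postPos := fun w => by
    rw [Finset.sum_map, Finset.sum_map]
    simp only [Equiv.coe_toEmbedding, pRun_tensor M₁ M₂ w, Equiv.symm_apply_apply]
    exact hp w

lemma tensor_pacc (M₁ M₂ : PostPFA α) (Sa Sr) (hd) (hp) (w : List α) :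
    (tensor M₁ M₂ Sa Sr hd hp).pacc w
      = ∑ p ∈ Sa, pRun M₁.A w p.1 * pRun M₂.A w p.2 := by
  rw [PostPFA.pacc]
  show ∑ i ∈ Sa.map _, pRun (tA M₁ M₂) w i = _
  rw [Finset.sum_map]
  simp only [Equiv.coe_toEmbedding, pRun_tensor M₁ M₂ w, Equiv.symm_apply_apply]

lemma tensor_prej (M₁ M₂ : PostPFA α) (Sa Sr) (hd) (hp) (w : List α) :
    (tensor M₁ M₂ Sa Sr hd hp).prej w
      = ∑ p ∈ Sr, pRun M₁.A w p.1 * pRun M₂.A w p.2 := by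
  rw [PostPFA.prej]
  show ∑ i ∈ Sr.map _, pRun (tA M₁ M₂) w i = _
  rw [Finset.sum_map]
  simp only [Equiv.coe_toEmbedding, pRun_tensor M₁ M₂ w, Equiv.symm_apply_apply]

lemma sum_product_mul (M₁ M₂ : PostPFA α) (s : Finset (Fin (M₁.n+1)))
    (t : Finset (Fin (M₂.n+1))) (w : List α) :
    ∑ p ∈ s ×ˢ t, pRun M₁.A w p.1 * pRun M₂.A w p.2
      = (∑ i ∈ s, pRun M₁.A w i) * (∑ j ∈ t, pRun M₂.A w j) := by
  rw [Finset.sum_mul_sum, Finset.sum_product]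

/-! ### Squaring (error amplification) -/

def sq (M : PostPFA α) : PostPFA α :=
  tensor M M (M.Qpa ×ˢ M.Qpa) (M.Qpr ×ˢ M.Qpr)
    (by
      rw [Finset.disjoint_left]
      rintro ⟨a, b⟩ h1 h2
      rw [Finset.mem_product] at h1 h2
      exact Finset.disjoint_left.mp M.disj h1.1 h2.1)
    (by
      intro w
      rw [sum_product_mul, sum_product_mul]
      have h := M.postPos w
      nlinarith [mul_pos h h,
        sq_nonneg ((∑ i ∈ M.Qpa, pRun M.A w i) - (∑ i ∈ M.Qpr, pRun M.A w i))])

lemma sq_pacc (M : PostPFA α) (w : List α) : (sq M).pacc w = M.pacc w * M.pacc w := by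
  rw [sq, tensor_pacc, sum_product_mul]; rfl

lemma sq_prej (M : PostPFA α) (w : List α) : (sq M).prej w = M.prej w * M.prej w := by
  rw [sq, tensor_prej, sum_product_mul]; rfl

lemma sq_fa (M : PostPFA α) (w : List α) :
    (sq M).fa w = (M.fa w)^2 / ((M.fa w)^2 + (1 - M.fa w)^2) := by
  have hs := postPos' M w
  have hss : (0:ℝ) < M.pacc w * M.pacc w + M.prej w * M.prej w := by
    nlinarith [mul_pos hs hs, sq_nonneg (M.pacc w - M.prej w)]
  rw [PostPFA.fa, sq_pacc, sq_prej]
  simp only [PostPFA.fa]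
  have hden : (0:ℝ) < (M.pacc w / (M.pacc w + M.prej w))^2
      + (1 - M.pacc w / (M.pacc w + M.prej w))^2 := by
    nlinarith [sq_nonneg (2*(M.pacc w/(M.pacc w + M.prej w)) - 1)]
  have hne : M.pacc w ^ 2 + M.prej w ^ 2 ≠ 0 := ne_of_gt (by nlinarith)
  field_simp [hne]
  ring

lemma sq_recognizes {M : PostPFA α} {L : Set (List α)} {ε : ℝ} (hε0 : 0 ≤ ε)
    (hε : ε < 1/2) (h : M.Recognizes L ε) : (sq M).Recognizes L (2 * ε^2) := by
  intro w
  have h1 := fa_le_one M w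
  have h0 := fa_nonneg M w
  set f := M.fa w with hf
  have hden : (0:ℝ) < f^2 + (1-f)^2 := by nlinarith [sq_nonneg (2*f - 1)]
  rw [sq_fa M w, ← hf]
  constructor
  · intro hw
    have hfl : 1 - ε ≤ f := (h w).1 hw
    rw [le_div_iff₀ hden]
    nlinarith [sq_nonneg (2*f-1), sq_nonneg (1-f), sq_nonneg ε, sq_nonneg (f - (1-ε))]
  · intro hw
    have hfu : f ≤ ε := (h w).2 hw
    rw [div_le_iff₀ hden]
    nlinarith [sq_nonneg (2*f-1), sq_nonneg f]

def ampl (M : PostPFA α) : ℕ → PostPFA α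
  | 0 => M
  | k+1 => sq (ampl M k)

def E (ε : ℝ) : ℕ → ℝ
  | 0 => ε
  | k+1 => 2 * (E ε k)^2

lemma ampl_spec {M : PostPFA α} {L : Set (List α)} {ε : ℝ} (hε0 : 0 ≤ ε)
    (hε : ε < 1/2) (h : M.Recognizes L ε) (k : ℕ) :
    0 ≤ E ε k ∧ E ε k < 1/2 ∧ (ampl M k).Recognizes L (E ε k) := by
  induction k with
  | zero => exact ⟨hε0, hε, h⟩
  | succ k ih =>
    obtain ⟨h0, h2, hr⟩ := ih
    refine ⟨?_, ?_, sq_recognizes h0 h2 hr⟩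
    · rw [E]; positivity
    · rw [E]; nlinarith

lemma E_nonneg {ε : ℝ} (hε0 : 0 ≤ ε) : ∀ k, 0 ≤ E ε k
  | 0 => hε0
  | k+1 => by rw [E]; positivity

lemma E_le {ε : ℝ} (hε0 : 0 ≤ ε) (hε : ε < 1/2) (k : ℕ) :
    2 * E ε k ≤ (2*ε)^(k+1) := by
  induction k with
  | zero => simp [E]
  | succ k ih =>
    calc 2 * E ε (k+1) = (2 * E ε k)^2 := by rw [E]; ring
      _ ≤ ((2*ε)^(k+1))^2 := by
          have h0 : 0 ≤ 2 * E ε k := by linarith [E_nonneg hε0 k]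
          exact pow_le_pow_left₀ h0 ih 2
      _ = (2*ε)^(2*(k+1)) := by rw [← pow_mul]; ring_nf
      _ ≤ (2*ε)^(k+2) := pow_le_pow_of_le_one (by linarith) (by linarith) (by omega)

/-! ### Intersection -/

lemma inter_sub (M₁ M₂ : PostPFA α) :
    M₁.Qpa ×ˢ M₂.Qpa ⊆ (M₁.Qpa ∪ M₁.Qpr) ×ˢ (M₂.Qpa ∪ M₂.Qpr) :=
  Finset.product_subset_product Finset.subset_union_left Finset.subset_union_left

def inter (M₁ M₂ : PostPFA α) : PostPFA α :=
  tensor M₁ M₂ (M₁.Qpa ×ˢ M₂.Qpa)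
    (((M₁.Qpa ∪ M₁.Qpr) ×ˢ (M₂.Qpa ∪ M₂.Qpr)) \ (M₁.Qpa ×ˢ M₂.Qpa))
    Finset.disjoint_sdiff
    (by
      intro w
      rw [Finset.sum_sdiff_eq_sub (inter_sub M₁ M₂), sum_product_mul, sum_product_mul,
        Finset.sum_union M₁.disj, Finset.sum_union M₂.disj]
      have h₁ := M₁.postPos w
      have h₂ := M₂.postPos w
      nlinarith [mul_pos h₁ h₂])

lemma inter_pacc (M₁ M₂ : PostPFA α) (w : List α) :
    (inter M₁ M₂).pacc w = M₁.pacc w * M₂.pacc w := by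
  rw [inter, tensor_pacc, sum_product_mul]; rfl

lemma inter_sum (M₁ M₂ : PostPFA α) (w : List α) :
    (inter M₁ M₂).pacc w + (inter M₁ M₂).prej w
      = (M₁.pacc w + M₁.prej w) * (M₂.pacc w + M₂.prej w) := by
  rw [inter, tensor_pacc, tensor_prej, Finset.sum_sdiff_eq_sub (inter_sub M₁ M₂),
    sum_product_mul, sum_product_mul, Finset.sum_union M₁.disj, Finset.sum_union M₂.disj]
  show _ = (M₁.pacc w + M₁.prej w) * (M₂.pacc w + M₂.prej w)
  rw [PostPFA.pacc, PostPFA.prej, PostPFA.pacc, PostPFA.prej]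
  ring

lemma inter_fa (M₁ M₂ : PostPFA α) (w : List α) :
    (inter M₁ M₂).fa w = M₁.fa w * M₂.fa w := by
  rw [PostPFA.fa, inter_sum M₁ M₂ w, inter_pacc, PostPFA.fa, PostPFA.fa, div_mul_div_comm]

/-! ### Assembly -/

lemma amp_below {ε : ℝ} (hε0 : 0 ≤ ε) (hε : ε < 1/2) : ∃ k, E ε k < 1/8 := by
  obtain ⟨n, hn⟩ : ∃ n, (2*ε)^n < 1/4 :=
    exists_pow_lt_of_lt_one (by norm_num) (by linarith)
  refine ⟨n, ?_⟩
  have h1 : (2*ε)^(n+1) ≤ (2*ε)^n :=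
    pow_le_pow_of_le_one (by linarith) (by linarith) (by omega)
  have h2 := E_le hε0 hε n
  linarith

lemma inter_PostS {L₁ L₂ : Set (List α)} (h₁ : PostS L₁) (h₂ : PostS L₂) :
    PostS (L₁ ∩ L₂) := by
  obtain ⟨M₁, ε₁, hε₁0, hε₁, hr₁⟩ := h₁
  obtain ⟨M₂, ε₂, hε₂0, hε₂, hr₂⟩ := h₂
  obtain ⟨k₁, hk₁⟩ := amp_below hε₁0 hε₁
  obtain ⟨k₂, hk₂⟩ := amp_below hε₂0 hε₂
  obtain ⟨he₁0, -, hA₁⟩ := ampl_spec hε₁0 hε₁ hr₁ k₁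
  obtain ⟨he₂0, -, hA₂⟩ := ampl_spec hε₂0 hε₂ hr₂ k₂
  refine ⟨inter (ampl M₁ k₁) (ampl M₂ k₂), 1/4, by norm_num, by norm_num, fun w => ?_⟩
  rw [inter_fa]
  have hb₁ := fa_le_one (ampl M₁ k₁) w
  have hb₂ := fa_le_one (ampl M₂ k₂) w
  have hc₁ := fa_nonneg (ampl M₁ k₁) w
  have hc₂ := fa_nonneg (ampl M₂ k₂) w
  constructor
  · intro hw
    have g₁ := (hA₁ w).1 hw.1
    have g₂ := (hA₂ w).1 hw.2
    nlinarith
  · intro hw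
    rcases (not_and_or.mp (fun hc : w ∈ L₁ ∧ w ∈ L₂ => hw hc)).symm with hw2 | hw1
    · have := (hA₂ w).2 hw2
      nlinarith
    · have := (hA₁ w).2 hw1
      nlinarith

lemma union_PostS {L₁ L₂ : Set (List α)} (h₁ : PostS L₁) (h₂ : PostS L₂) :
    PostS (L₁ ∪ L₂) := by
  have : L₁ ∪ L₂ = (L₁ᶜ ∩ L₂ᶜ)ᶜ := by
    rw [Set.compl_inter, compl_compl, compl_compl]
  rw [this]
  exact compl_PostS (inter_PostS (compl_PostS h₁) (compl_PostS h₂))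

end PostSClosureAux


/-- `PostS` is closed under complementation, union, and intersection. -/
theorem PostS_closure {α : Type} [Fintype α] (L L₁ L₂ : Set (List α))
    (hL : PostS L) (h₁ : PostS L₁) (h₂ : PostS L₂) :
    PostS Lᶜ ∧ PostS (L₁ ∪ L₂) ∧ PostS (L₁ ∩ L₂) := by
  exact ⟨PostSClosureAux.compl_PostS hL,
    PostSClosureAux.union_PostS h₁ h₂,
    PostSClosureAux.inter_PostS h₁ h₂⟩
end
end

section
/- Every language in PostS is stochastic: if L ⊆ Σ* is recognized with some error bound ε < 1/2 by an RT-PostPFA, then there exists an RT-PFA whose acceptance probability exceeds 1/2 exactly on the members of L, i.e. L ∈ S with cutpoint 1/2. -/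
noncomputable section

/-- A standard real-time probabilistic finite automaton (RT-PFA). -/
structure PFA (α : Type) where
  n : ℕ
  A : ESym α → Matrix (Fin (n + 1)) (Fin (n + 1)) ℝ
  nonneg : ∀ σ i j, 0 ≤ A σ i j
  colSum : ∀ σ j, ∑ i, A σ i j = 1
  Qa : Finset (Fin (n + 1))

/-- Acceptance probability of an RT-PFA. -/
def PFA.fa {α : Type} (M : PFA α) (w : List α) : ℝ :=
  ∑ i ∈ M.Qa, pRun M.A w i

lemma sum_mulVec_aux {n : ℕ} (A : Matrix (Fin (n + 1)) (Fin (n + 1)) ℝ)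
    (h : ∀ j, ∑ i, A i j = 1) (v : Fin (n + 1) → ℝ) :
    ∑ i, A.mulVec v i = ∑ j, v j := by
  simp only [Matrix.mulVec, dotProduct]
  rw [Finset.sum_comm]
  simp [← Finset.sum_mul, h]

lemma sum_foldl_aux {α : Type} {n : ℕ}
    (A : ESym α → Matrix (Fin (n + 1)) (Fin (n + 1)) ℝ)
    (h : ∀ σ j, ∑ i, A σ i j = 1) (l : List (ESym α)) (v : Fin (n + 1) → ℝ) :
    ∑ i, l.foldl (fun v σ => (A σ).mulVec v) v i = ∑ i, v i := by
  induction l generalizing v with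
  | nil => rfl
  | cons σ l ih =>
    rw [List.foldl_cons, ih, sum_mulVec_aux _ (h σ)]

lemma sum_pRun {α : Type} {n : ℕ}
    (A : ESym α → Matrix (Fin (n + 1)) (Fin (n + 1)) ℝ)
    (h : ∀ σ j, ∑ i, A σ i j = 1) (w : List α) :
    ∑ i, pRun A w i = 1 := by
  rw [pRun, sum_foldl_aux A h]
  simp [Pi.single_apply]

lemma foldl_letters_aux {α : Type} {n : ℕ}
    (A A' : ESym α → Matrix (Fin (n + 1)) (Fin (n + 1)) ℝ)
    (h : ∀ a : α, A' (ESym.letter a) = A (ESym.letter a))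
    (w : List α) (v : Fin (n + 1) → ℝ) :
    (w.map ESym.letter).foldl (fun v σ => (A' σ).mulVec v) v =
      (w.map ESym.letter).foldl (fun v σ => (A σ).mulVec v) v := by
  induction w generalizing v with
  | nil => rfl
  | cons a w ih => simp only [List.map_cons, List.foldl_cons, h, ih]

lemma pRun_modified {α : Type} {n : ℕ}
    (A A' : ESym α → Matrix (Fin (n + 1)) (Fin (n + 1)) ℝ)
    (B : Matrix (Fin (n + 1)) (Fin (n + 1)) ℝ)
    (hc : A' ESym.cent = A ESym.cent)
    (hl : ∀ a : α, A' (ESym.letter a) = A (ESym.letter a))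
    (hd : A' ESym.dollar = B * A ESym.dollar)
    (w : List α) :
    pRun A' w = B.mulVec (pRun A w) := by
  simp only [pRun, List.foldl_cons, List.foldl_append, List.foldl_nil, hc, hd,
    foldl_letters_aux A A' hl]
  rw [← Matrix.mulVec_mulVec]

/-- Every language in `PostS` is stochastic: it is recognized by some RT-PFA
with (strict) cutpoint `1/2`. -/
theorem PostS_subset_S {α : Type} [Fintype α] (L : Set (List α)) (hL : PostS L) :
    ∃ M : PFA α, L = {w : List α | 1 / 2 < M.fa w} := by
  obtain ⟨M, ε, hε0, hεhalf, hrec⟩ := hL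
  by_cases ha : M.Qpa.Nonempty
  · by_cases hr : M.Qpr.Nonempty
    · -- main case
      obtain ⟨a₀, ha₀⟩ := ha
      obtain ⟨r₀, hr₀⟩ := hr
      have hne : a₀ ≠ r₀ := by
        intro h
        exact (Finset.disjoint_left.mp M.disj ha₀) (h ▸ hr₀)
      set B : Matrix (Fin (M.n + 1)) (Fin (M.n + 1)) ℝ := fun i j =>
        if j ∈ M.Qpa then (if i = a₀ then 1 else 0)
        else if j ∈ M.Qpr then (if i = r₀ then 1 else 0)
        else ((if i = a₀ then (1:ℝ)/2 else 0) + (if i = r₀ then (1:ℝ)/2 else 0))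
        with hB
      have hBnn : ∀ i j, 0 ≤ B i j := by
        intro i j
        simp only [hB]
        split_ifs <;> norm_num
      have hBcol : ∀ j, ∑ i, B i j = 1 := by
        intro j
        by_cases h1 : j ∈ M.Qpa
        · simp [hB, h1]
        · by_cases h2 : j ∈ M.Qpr
          · simp [hB, h1, h2]
          · simp only [hB, h1, h2, if_false, Finset.sum_add_distrib,
              Finset.sum_ite_eq', Finset.mem_univ, if_true]
            norm_num
      set A' : ESym α → Matrix (Fin (M.n + 1)) (Fin (M.n + 1)) ℝ := fun σ =>
        match σ with
        | ESym.dollar => B * M.A ESym.dollar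
        | σ => M.A σ
        with hA'
      have hA'c : A' ESym.cent = M.A ESym.cent := rfl
      have hA'l : ∀ a : α, A' (ESym.letter a) = M.A (ESym.letter a) := fun _ => rfl
      have hA'd : A' ESym.dollar = B * M.A ESym.dollar := rfl
      have hA'nn : ∀ σ i j, 0 ≤ A' σ i j := by
        intro σ i j
        match σ with
        | ESym.cent => exact M.nonneg _ i j
        | ESym.letter a => exact M.nonneg _ i j
        | ESym.dollar =>
          rw [hA'd, Matrix.mul_apply]
          exact Finset.sum_nonneg fun k _ =>
            mul_nonneg (hBnn i k) (M.nonneg _ k j)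
      have hA'col : ∀ σ j, ∑ i, A' σ i j = 1 := by
        intro σ j
        match σ with
        | ESym.cent => exact M.colSum _ j
        | ESym.letter a => exact M.colSum _ j
        | ESym.dollar =>
          rw [hA'd]
          simp only [Matrix.mul_apply]
          rw [Finset.sum_comm]
          simp [← Finset.sum_mul, hBcol, M.colSum]
      refine ⟨⟨M.n, A', hA'nn, hA'col, {a₀}⟩, ?_⟩
      ext w
      have hsum : ∑ i, pRun M.A w i = 1 := sum_pRun M.A M.colSum w
      have hpos : 0 < M.pacc w + M.prej w := M.postPos w
      have hfa : PFA.fa ⟨M.n, A', hA'nn, hA'col, {a₀}⟩ w =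
          M.pacc w + (1 - M.pacc w - M.prej w) / 2 := by
        show ∑ i ∈ {a₀}, pRun A' w i = _
        rw [Finset.sum_singleton, pRun_modified M.A A' B hA'c hA'l hA'd w]
        simp only [Matrix.mulVec, dotProduct]
        have hBrow : ∀ j, B a₀ j =
            if j ∈ M.Qpa then 1 else if j ∈ M.Qpr then 0 else (1:ℝ)/2 := by
          intro j
          simp [hB, hne]
        have key : ∑ j, B a₀ j * pRun M.A w j =
            M.pacc w + (1/2) * ∑ j ∈ (M.Qpa ∪ M.Qpr)ᶜ, pRun M.A w j := by
          rw [← Finset.sum_add_sum_compl (M.Qpa ∪ M.Qpr)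
            (fun j => B a₀ j * pRun M.A w j), Finset.sum_union M.disj]
          have e1 : ∑ j ∈ M.Qpa, B a₀ j * pRun M.A w j = M.pacc w := by
            apply Finset.sum_congr rfl
            intro j hj
            rw [hBrow j, if_pos hj, one_mul]
          have e2 : ∑ j ∈ M.Qpr, B a₀ j * pRun M.A w j = 0 := by
            apply Finset.sum_eq_zero
            intro j hj
            have hj' : j ∉ M.Qpa := Finset.disjoint_right.mp M.disj hj
            rw [hBrow j, if_neg hj', if_pos hj, zero_mul]
          have e3 : ∑ j ∈ (M.Qpa ∪ M.Qpr)ᶜ, B a₀ j * pRun M.A w j =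
              (1/2) * ∑ j ∈ (M.Qpa ∪ M.Qpr)ᶜ, pRun M.A w j := by
            rw [Finset.mul_sum]
            apply Finset.sum_congr rfl
            intro j hj
            rw [Finset.mem_compl, Finset.mem_union] at hj
            push_neg at hj
            rw [hBrow j, if_neg hj.1, if_neg hj.2]
          rw [e1, e2, e3, add_zero]
        have hrest : ∑ j ∈ (M.Qpa ∪ M.Qpr)ᶜ, pRun M.A w j =
            1 - M.pacc w - M.prej w := by
          have : ∑ j ∈ M.Qpa ∪ M.Qpr, pRun M.A w j
              + ∑ j ∈ (M.Qpa ∪ M.Qpr)ᶜ, pRun M.A w j = 1 := by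
            rw [Finset.sum_add_sum_compl, hsum]
          rw [Finset.sum_union M.disj] at this
          unfold PostPFA.pacc PostPFA.prej
          linarith
        rw [key, hrest]
        ring
      simp only [Set.mem_setOf_eq, hfa]
      constructor
      · intro hw
        have h1 : 1 - ε ≤ M.fa w := (hrec w).1 hw
        rw [PostPFA.fa, le_div_iff₀ hpos] at h1
        nlinarith
      · intro hlt
        by_contra hw
        have h2 : M.fa w ≤ ε := (hrec w).2 hw
        rw [PostPFA.fa, div_le_iff₀ hpos] at h2
        nlinarith
    · -- Qpr empty: fa = 1 everywhere, so L = univ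
      have hLuniv : L = Set.univ := by
        ext w
        simp only [Set.mem_univ, iff_true]
        by_contra hw
        have h2 : M.fa w ≤ ε := (hrec w).2 hw
        have hprej : M.prej w = 0 := by
          rw [PostPFA.prej, Finset.not_nonempty_iff_eq_empty.mp hr,
            Finset.sum_empty]
        have hpos : 0 < M.pacc w + M.prej w := M.postPos w
        rw [PostPFA.fa, hprej, add_zero, div_self (by linarith [hpos] : M.pacc w ≠ 0)] at h2
        linarith
      refine ⟨⟨0, fun _ _ _ => (1:ℝ), fun _ _ _ => zero_le_one,
        fun σ j => by simp, Finset.univ⟩, ?_⟩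
      have hone : ∀ w : List α, PFA.fa ⟨0, fun _ _ _ => (1:ℝ), fun _ _ _ => zero_le_one,
          fun σ j => by simp, Finset.univ⟩ w = 1 := by
        intro w
        show ∑ i, pRun _ w i = 1
        exact sum_pRun _ (fun σ j => by simp) w
      rw [hLuniv]
      ext w
      simp only [Set.mem_univ, Set.mem_setOf_eq, hone w, true_iff]
      norm_num
  · -- Qpa empty: fa = 0 everywhere, so L = ∅
    have hLempty : L = ∅ := by
      ext w
      simp only [Set.mem_empty_iff_false, iff_false]
      intro hw
      have h1 : 1 - ε ≤ M.fa w := (hrec w).1 hw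
      have hpacc : M.pacc w = 0 := by
        rw [PostPFA.pacc, Finset.not_nonempty_iff_eq_empty.mp ha,
          Finset.sum_empty]
      rw [PostPFA.fa, hpacc, zero_div] at h1
      linarith
    refine ⟨⟨0, fun _ _ _ => (1:ℝ), fun _ _ _ => zero_le_one,
      fun σ j => by simp, ∅⟩, ?_⟩
    rw [hLempty]
    ext w
    simp [PFA.fa]
end
end
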